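/- Let F be the 1-row matrix consisting of l ones, l ≥ 3, and let n ≥ l − 1. Then sat(n, F) = l + 1. -/

import Mathlib

/-- `F` is a submatrix of `M` (up to row/column permutations): there are injections
selecting rows and columns of `M` giving `F`. -/
def IsSubmatrix {α : Type*} {k c n m : ℕ} (F : Fin k → Fin c → α) (M : Fin n → Fin m → α) :
    Prop :=
  ∃ r : Fin k → Fin n, ∃ s : Fin c → Fin m,
    Function.Injective r ∧ Function.Injective s ∧ ∀ i j, M (r i) (s j) = F i j

/-- A matrix is simple if its columns are pairwise distinct. -/
def Simple' {α : Type*} {n m : ℕ} (M : Fin n → Fin m → α) : Prop :=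
  ∀ j₁ j₂ : Fin m, (∀ i, M i j₁ = M i j₂) → j₁ = j₂

/-- `C` occurs as a column of `M`. -/
def IsCol {α : Type*} {n m : ℕ} (M : Fin n → Fin m → α) (C : Fin n → α) : Prop :=
  ∃ j, ∀ i, M i j = C i

/-- The matrix `[M, C]` obtained by appending the column `C` to `M`. -/
def addCol {α : Type*} {n m : ℕ} (M : Fin n → Fin m → α) (C : Fin n → α) :
    Fin n → Fin (m + 1) → α :=
  fun i j => if h : (j : ℕ) < m then M i ⟨j, h⟩ else C i

/-- `M` is `F`-saturated: simple, `F`-free, and adding any missing column creates `F`. -/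
def Saturated {α : Type*} {k c n m : ℕ} (F : Fin k → Fin c → α) (M : Fin n → Fin m → α) :
    Prop :=
  Simple' M ∧ ¬ IsSubmatrix F M ∧
    ∀ C : Fin n → α, ¬ IsCol M C → IsSubmatrix F (addCol M C)

/-- The set of sizes (numbers of columns) of `F`-saturated `n`-row matrices. -/
def satSet {α : Type*} {k c : ℕ} (F : Fin k → Fin c → α) (n : ℕ) : Set ℕ :=
  {m | ∃ M : Fin n → Fin m → α, Saturated F M}

/-- The set of sizes of simple `F`-free `n`-row matrices. -/
def forbSet {α : Type*} {k c : ℕ} (F : Fin k → Fin c → α) (n : ℕ) : Set ℕ :=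
  {m | ∃ M : Fin n → Fin m → α, Simple' M ∧ ¬ IsSubmatrix F M}

/-- `K_k`: the `k × 2^k` 0-1 matrix of all distinct 0-1 columns of length `k`. -/
def Kfull (k : ℕ) : Fin k → Fin (2 ^ k) → Bool :=
  fun i j => Nat.testBit j.val i.val

open Finset

lemma subm_iff {n m : ℕ} (M : Fin n → Fin m → Bool) (l : ℕ) :
    IsSubmatrix (fun (_ : Fin 1) (_ : Fin l) => true) M ↔
      ∃ i, l ≤ (Finset.univ.filter (fun j => M i j = true)).card := by
  constructor
  · rintro ⟨r, s, hr, hs, h⟩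
    refine ⟨r 0, ?_⟩
    have hsub : Finset.univ.image s ⊆ Finset.univ.filter (fun j => M (r 0) j = true) := by
      intro j hj
      simp only [Finset.mem_image] at hj
      obtain ⟨k, -, rfl⟩ := hj
      simp [h 0 k]
    calc l = (Finset.univ.image s).card := by
            rw [Finset.card_image_of_injective _ hs, Finset.card_univ, Fintype.card_fin]
      _ ≤ _ := Finset.card_le_card hsub
  · rintro ⟨i, hi⟩
    obtain ⟨T, hTsub, hT⟩ := Finset.exists_subset_card_eq hi
    refine ⟨fun _ => i, fun k => T.orderEmbOfFin hT k, ?_, ?_, ?_⟩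
    · intro a b _; exact Subsingleton.elim a b
    · exact (T.orderEmbOfFin hT).injective
    · intro _ k
      have := hTsub (T.orderEmbOfFin_mem hT k)
      simpa using (Finset.mem_filter.mp this).2

def Msat (l n : ℕ) : Fin n → Fin (l + 1) → Bool :=
  fun i j => decide ((j : ℕ) < l ∧ min (i : ℕ) (l - 1) ≠ (j : ℕ))

lemma Msat_saturated (l n : ℕ) (hl : 3 ≤ l) (hn : l - 1 ≤ n) :
    Saturated (fun (_ : Fin 1) (_ : Fin l) => true) (Msat l n) := by
  have hn2 : 2 ≤ n := by omega
  refine ⟨?_, ?_, ?_⟩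
  · -- Simple'
    have key : ∀ j1 j2 : Fin (l + 1), (j1 : ℕ) < (j2 : ℕ) →
        (∀ i, Msat l n i j1 = Msat l n i j2) → False := by
      intro j1 j2 hlt h
      have hj2 := j2.isLt
      by_cases h2 : (j2 : ℕ) < l
      · have := h ⟨(j1 : ℕ), by omega⟩
        simp only [Msat, decide_eq_decide, Fin.val_mk] at this
        omega
      · by_cases hj10 : (j1 : ℕ) = 0
        · have := h ⟨1, by omega⟩
          simp only [Msat, decide_eq_decide, Fin.val_mk] at this
          omega
        · have := h ⟨0, by omega⟩
          simp only [Msat, decide_eq_decide, Fin.val_mk] at this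
          omega
    intro j1 j2 h
    rcases lt_trichotomy (j1 : ℕ) (j2 : ℕ) with hlt | heq | hgt
    · exact absurd h (fun hh => key j1 j2 hlt hh)
    · exact Fin.ext heq
    · exact absurd (fun i => (h i).symm) (fun hh => key j2 j1 hgt hh)
  · -- F-free
    rw [subm_iff]
    rintro ⟨i, hi⟩
    have hb : (Finset.univ.filter (fun j => Msat l n i j = true)).card ≤
        (((Finset.range l).erase (min (i : ℕ) (l - 1)))).card := by
      refine Finset.card_le_card_of_injOn (fun j => (j : ℕ)) ?_ ?_
      · intro j hj
        simp only [Finset.mem_coe, Finset.mem_filter, Msat, decide_eq_true_eq] at hj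
        simp only [Finset.mem_coe, Finset.mem_erase, Finset.mem_range]
        omega
      · intro a _ b _ hab
        exact Fin.ext hab
    rw [Finset.card_erase_of_mem (by simp only [Finset.mem_range]; omega),
      Finset.card_range] at hb
    omega
  · -- saturation
    intro C hC
    have hz : ∃ i0, C i0 = true := by
      by_contra h
      push_neg at h
      exact hC ⟨⟨l, by omega⟩, fun i => by
        simp only [Msat, Fin.val_mk]
        rw [decide_eq_false (by omega)]
        exact (Bool.not_eq_true _).mp (h i) |>.symm⟩
    obtain ⟨i0, hi0⟩ := hz
    rw [subm_iff]
    refine ⟨i0, ?_⟩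
    set f : ℕ := min (i0 : ℕ) (l - 1) with hf
    have hfl : f < l := by omega
    have hall : ∀ x ∈ insert (l + 1) ((Finset.range l).erase f), x < l + 1 + 1 := by
      intro x hx
      simp only [Finset.mem_insert, Finset.mem_erase, Finset.mem_range] at hx
      omega
    set T : Finset (Fin (l + 1 + 1)) := Finset.attachFin _ hall with hT
    have hTcard : T.card = l := by
      rw [hT, Finset.card_attachFin,
        Finset.card_insert_of_notMem (by simp only [Finset.mem_erase, Finset.mem_range]; omega),
        Finset.card_erase_of_mem (by simp only [Finset.mem_range]; omega), Finset.card_range]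
      omega
    have hsub : T ⊆ Finset.univ.filter (fun j => addCol (Msat l n) C i0 j = true) := by
      intro j hj
      rw [hT, Finset.mem_attachFin] at hj
      simp only [Finset.mem_insert, Finset.mem_erase, Finset.mem_range] at hj
      refine Finset.mem_filter.mpr ⟨Finset.mem_univ _, ?_⟩
      rcases hj with hj | hj
      · simp only [addCol]
        rw [dif_neg (by omega)]
        exact hi0
      · simp only [addCol]
        rw [dif_pos (by omega : (j : ℕ) < l + 1)]
        simp only [Msat, Fin.val_mk]
        rw [decide_eq_true (by omega)]
    calc l = T.card := hTcard.symm
      _ ≤ _ := Finset.card_le_card hsub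

lemma lower_aux {l n m : ℕ} (hl : 3 ≤ l) (hn : l - 1 ≤ n)
    (M : Fin n → Fin m → Bool)
    (hsat : Saturated (fun (_ : Fin 1) (_ : Fin l) => true) M) : l + 1 ≤ m := by
  obtain ⟨hsimple, hfree, hsatur⟩ := hsat
  set R : Fin n → Finset (Fin m) := fun i => Finset.univ.filter (fun j => M i j = true) with hRdef
  have hRc : ∀ i, (R i).card = (Finset.univ.filter (fun j => M i j = true)).card :=
    fun _ => rfl
  have hR : ∀ i, (R i).card ≤ l - 1 := by
    intro i
    by_contra h
    exact hfree ((subm_iff M l).mpr ⟨i, by have := hRc i; omega⟩)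
  -- key consequence of saturation
  have key : ∀ C : Fin n → Bool, ¬ IsCol M C → ∃ i, C i = true ∧ l - 1 ≤ (R i).card := by
    intro C hC
    obtain ⟨i, hi⟩ := (subm_iff _ l).mp (hsatur C hC)
    refine ⟨i, ?_, ?_⟩
    · -- C i = true
      by_contra hCi
      have hCi' : C i = false := by
        cases hC2 : C i
        · rfl
        · exact absurd hC2 hCi
      have hsub : (Finset.univ.filter (fun j => addCol M C i j = true)) ⊆
          (R i).image Fin.castSucc := by
        intro j hj
        rw [Finset.mem_filter] at hj
        by_cases hjm : (j : ℕ) < m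
        · refine Finset.mem_image.mpr ⟨⟨(j : ℕ), hjm⟩, ?_, Fin.ext rfl⟩
          have := hj.2
          simp only [addCol] at this
          rw [dif_pos hjm] at this
          exact Finset.mem_filter.mpr ⟨Finset.mem_univ _, this⟩
        · exfalso
          have := hj.2
          simp only [addCol] at this
          rw [dif_neg hjm] at this
          rw [hCi'] at this
          exact Bool.false_ne_true this
      have := Finset.card_le_card hsub
      rw [Finset.card_image_of_injective _ (Fin.castSucc_injective m)] at this
      have := hR i
      omega
    · -- l - 1 ≤ (R i).card
      have hsub : (Finset.univ.filter (fun j => addCol M C i j = true)) ⊆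
          insert (Fin.last m) ((R i).image Fin.castSucc) := by
        intro j hj
        rw [Finset.mem_filter] at hj
        by_cases hjm : (j : ℕ) < m
        · refine Finset.mem_insert.mpr (Or.inr (Finset.mem_image.mpr ⟨⟨(j : ℕ), hjm⟩, ?_, Fin.ext rfl⟩))
          have := hj.2
          simp only [addCol] at this
          rw [dif_pos hjm] at this
          exact Finset.mem_filter.mpr ⟨Finset.mem_univ _, this⟩
        · exact Finset.mem_insert.mpr (Or.inl (Fin.ext (by simp only [Fin.val_last]; have := j.isLt; omega)))
      have h1 := Finset.card_le_card hsub
      have h2 := Finset.card_insert_le (Fin.last m) ((R i).image Fin.castSucc)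
      rw [Finset.card_image_of_injective _ (Fin.castSucc_injective m)] at h2
      omega
  -- the zero column is a column of M
  have hzero : ∃ j0 : Fin m, ∀ i, M i j0 = false := by
    by_contra h
    push_neg at h
    have hnc : ¬ IsCol M (fun _ => false) := by
      rintro ⟨j, hj⟩
      obtain ⟨i', hi'⟩ := h j
      exact hi' (hj i')
    obtain ⟨i, hi, -⟩ := key _ hnc
    exact Bool.false_ne_true hi
  obtain ⟨j0, hj0⟩ := hzero
  have hm1 : 1 ≤ m := j0.pos
  by_contra hcon
  have hm : m ≤ l := by omega
  -- a non-column exists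
  have hnc : ∃ C : Fin n → Bool, ¬ IsCol M C := by
    by_contra h
    push_neg at h
    have hcard : 2 ^ n ≤ m := by
      classical
      have hinj : Function.Injective (fun C : Fin n → Bool => (h C).choose) := by
        intro C1 C2 hc
        funext i
        have e1 := (h C1).choose_spec i
        have e2 := (h C2).choose_spec i
        have hc' : (h C1).choose = (h C2).choose := hc
        rw [← e1, ← e2, hc']
      have := Fintype.card_le_of_injective _ hinj
      simpa [Fintype.card_fun] using this
    have h1 : l - 2 < 2 ^ (l - 2) := Nat.lt_two_pow_self
    have h2 : 2 ^ (l - 1) ≤ 2 ^ n := Nat.pow_le_pow_right (by norm_num) hn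
    have h3 : 2 ^ (l - 1) = 2 ^ (l - 2) * 2 := by
      rw [← pow_succ]
      congr 1
      omega
    omega
  obtain ⟨C0, hC0⟩ := hnc
  obtain ⟨i0, -, hi0⟩ := key C0 hC0
  -- R i ⊆ univ.erase j0 for all i
  have hRsub : ∀ i, R i ⊆ Finset.univ.erase j0 := by
    intro i j hj
    refine Finset.mem_erase.mpr ⟨?_, Finset.mem_univ _⟩
    rintro rfl
    rw [hRdef, Finset.mem_filter, hj0 i] at hj
    exact Bool.false_ne_true hj.2
  have hcer : (Finset.univ.erase j0).card = m - 1 := by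
    rw [Finset.card_erase_of_mem (Finset.mem_univ _), Finset.card_univ, Fintype.card_fin]
  have hml : m = l := by
    have := Finset.card_le_card (hRsub i0)
    omega
  -- rows with many ones are all-ones off j0
  have hstep : ∀ i, l - 1 ≤ (R i).card → ∀ j : Fin m, j ≠ j0 → M i j = true := by
    intro i hi j hjj
    have heq : R i = Finset.univ.erase j0 :=
      Finset.eq_of_subset_of_card_le (hRsub i) (by omega)
    have : j ∈ R i := by
      rw [heq]
      exact Finset.mem_erase.mpr ⟨hjj, Finset.mem_univ _⟩
    rw [hRdef, Finset.mem_filter] at this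
    exact this.2
  by_cases hall : ∀ i : Fin n, l - 1 ≤ (R i).card
  · -- two identical all-one columns
    obtain ⟨b, c, hbm, hcm, hbc, hbj, hcj⟩ :
        ∃ b c : ℕ, b < m ∧ c < m ∧ b ≠ c ∧ b ≠ (j0 : ℕ) ∧ c ≠ (j0 : ℕ) := by
      refine ⟨if (j0 : ℕ) = 0 then 1 else 0, if (j0 : ℕ) = 2 then 1 else 2, ?_, ?_, ?_, ?_, ?_⟩ <;>
        split_ifs <;> omega
    have : (⟨b, hbm⟩ : Fin m) = ⟨c, hcm⟩ := by
      apply hsimple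
      intro i
      rw [hstep i (hall i) _ (by simp [Fin.ext_iff]; omega),
        hstep i (hall i) _ (by simp [Fin.ext_iff]; omega)]
    simp [Fin.ext_iff] at this
    omega
  · push_neg at hall
    obtain ⟨i1, hi1⟩ := hall
    have hii : i0 ≠ i1 := by
      rintro rfl
      omega
    have hnc1 : ¬ IsCol M (fun i => decide (i = i1)) := by
      rintro ⟨j, hj⟩
      by_cases hjj : j = j0
      · subst hjj
        have := hj i1
        rw [hj0 i1] at this
        simp at this
      · have := hj i0
        rw [hstep i0 hi0 j hjj] at this
        simp [hii] at this
    obtain ⟨i2, hi2t, hi2c⟩ := key _ hnc1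
    have : i2 = i1 := by simpa using hi2t
    subst this
    omega

theorem stmt_9 (l n : ℕ) (hl : 3 ≤ l) (hn : l - 1 ≤ n) :
    IsLeast (satSet (fun (_ : Fin 1) (_ : Fin l) => true) n) (l + 1) := by
  constructor
  · exact ⟨Msat l n, Msat_saturated l n hl hn⟩
  · rintro m ⟨M, hM⟩
    exact lower_aux hl hn M hM
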